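/- Let W : ℝ^{3×3} → ℝ be a quadratic form (i.e. W(X) = B(X,X) for some symmetric bilinear form B on ℝ^{3×3}) which is isotropic in the sense that W(Qᵀ X Q) = W(X) for all Q ∈ SO(3) and all X ∈ ℝ^{3×3}. Then there exist real numbers b₁, b₂, b₃ such that W(X) = b₁‖sym X‖² + b₂‖skew X‖² + b₃ (tr X)² for all X ∈ ℝ^{3×3}. -/

import Mathlib

open Matrix

set_option maxHeartbeats 8000000

noncomputable section

/-- Symmetric part of a matrix. -/
def msym {n : ℕ} (X : Matrix (Fin n) (Fin n) ℝ) : Matrix (Fin n) (Fin n) ℝ :=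
  (1 / 2 : ℝ) • (X + Xᵀ)

/-- Skew-symmetric part of a matrix. -/
def mskew {n : ℕ} (X : Matrix (Fin n) (Fin n) ℝ) : Matrix (Fin n) (Fin n) ℝ :=
  (1 / 2 : ℝ) • (X - Xᵀ)

/-- Squared Frobenius norm `‖X‖² = tr(XᵀX)`. -/
def mnormSq {n : ℕ} (X : Matrix (Fin n) (Fin n) ℝ) : ℝ :=
  Matrix.trace (Xᵀ * X)

namespace Stmt4Aux

abbrev E (i j : Fin 3) : Matrix (Fin 3) (Fin 3) ℝ := single i j 1

/-- cyclic permutation rotation -/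
def MC : Matrix (Fin 3) (Fin 3) ℝ := Matrix.of fun i j =>
  if i = 0 then (if j = 1 then 1 else 0)
  else if i = 1 then (if j = 2 then 1 else 0)
  else (if j = 0 then 1 else 0)

/-- swap-with-sign rotation -/
def MP : Matrix (Fin 3) (Fin 3) ℝ := Matrix.of fun i j =>
  if i = 0 then (if j = 1 then 1 else 0)
  else if i = 1 then (if j = 0 then 1 else 0)
  else (if j = 2 then -1 else 0)

/-- 3-4-5 rotation about the z axis -/
def MR : Matrix (Fin 3) (Fin 3) ℝ := Matrix.of fun i j =>
  if i = 0 then (if j = 0 then 3/5 else if j = 1 then 4/5 else 0)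
  else if i = 1 then (if j = 0 then -(4/5) else if j = 1 then 3/5 else 0)
  else (if j = 2 then 1 else 0)

def nx : Fin 3 → Fin 3 := fun i => if i = 0 then 1 else if i = 1 then 2 else 0
def tw : Fin 3 → Fin 3 := fun i => if i = 0 then 1 else if i = 1 then 0 else 2
def sp : Fin 3 → ℝ := fun i => if i = 2 then -1 else 1
def sA : Fin 3 → ℝ := fun i => if i = 0 then 1 else -1
def sB : Fin 3 → ℝ := fun i => if i = 1 then 1 else -1
def sC : Fin 3 → ℝ := fun i => if i = 2 then 1 else -1

lemma hMC1 : MCᵀ * MC = 1 := by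
  ext i j; fin_cases i <;> fin_cases j <;>
    norm_num [MC, Matrix.mul_apply, Fin.sum_univ_three, Matrix.one_apply,
      Matrix.transpose_apply, Fin.ext_iff, -Fin.val_eq_zero_iff]

lemma hMC2 : MC.det = 1 := by norm_num [MC, Matrix.det_fin_three, Fin.ext_iff, -Fin.val_eq_zero_iff]

lemma hMP1 : MPᵀ * MP = 1 := by
  ext i j; fin_cases i <;> fin_cases j <;>
    norm_num [MP, Matrix.mul_apply, Fin.sum_univ_three, Matrix.one_apply,
      Matrix.transpose_apply, Fin.ext_iff, -Fin.val_eq_zero_iff]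

lemma hMP2 : MP.det = 1 := by norm_num [MP, Matrix.det_fin_three, Fin.ext_iff, -Fin.val_eq_zero_iff]

lemma hMR1 : MRᵀ * MR = 1 := by
  ext i j; fin_cases i <;> fin_cases j <;>
    norm_num [MR, Matrix.mul_apply, Fin.sum_univ_three, Matrix.one_apply,
      Matrix.transpose_apply, Fin.ext_iff, -Fin.val_eq_zero_iff]

lemma hMR2 : MR.det = 1 := by norm_num [MR, Matrix.det_fin_three, Fin.ext_iff, -Fin.val_eq_zero_iff]

lemma conjC (i j : Fin 3) : MCᵀ * E i j * MC = E (nx i) (nx j) := by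
  fin_cases i <;> fin_cases j <;>
    · ext a b
      fin_cases a <;> fin_cases b <;>
        norm_num [MC, nx, Matrix.mul_apply, Fin.sum_univ_three, Matrix.single,
          Matrix.transpose_apply, Fin.ext_iff, -Fin.val_eq_zero_iff]

lemma conjP (i j : Fin 3) : MPᵀ * E i j * MP = (sp i * sp j) • E (tw i) (tw j) := by
  fin_cases i <;> fin_cases j <;>
    · ext a b
      fin_cases a <;> fin_cases b <;>
        norm_num [MP, sp, tw, Matrix.mul_apply, Fin.sum_univ_three, Matrix.single,
          Matrix.transpose_apply, Fin.ext_iff, Matrix.smul_apply, -Fin.val_eq_zero_iff]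

lemma conjR : MRᵀ * E 0 0 * MR =
    (9/25 : ℝ) • E 0 0 + (12/25 : ℝ) • E 0 1 + (12/25 : ℝ) • E 1 0 + (16/25 : ℝ) • E 1 1 := by
  ext a b; fin_cases a <;> fin_cases b <;>
    norm_num [MR, Matrix.mul_apply, Fin.sum_univ_three, Matrix.single,
      Matrix.transpose_apply, Fin.ext_iff, -Fin.val_eq_zero_iff]

lemma conjDiag (s : Fin 3 → ℝ) (i j : Fin 3) :
    (Matrix.diagonal s)ᵀ * E i j * (Matrix.diagonal s) = (s i * s j) • E i j := by
  rw [Matrix.diagonal_transpose]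
  ext a b
  by_cases h1 : i = a <;> by_cases h2 : j = b <;>
    simp [Matrix.single, Matrix.diagonal_mul, Matrix.mul_diagonal, h1, h2, mul_comm]

lemma diagOrth (s : Fin 3 → ℝ) (hs : ∀ i, s i = 1 ∨ s i = -1) :
    (Matrix.diagonal s)ᵀ * (Matrix.diagonal s) = 1 := by
  rw [Matrix.diagonal_transpose, Matrix.diagonal_mul_diagonal]
  have h : (fun i => s i * s i) = fun _ => (1:ℝ) := by
    funext i; rcases hs i with h | h <;> rw [h] <;> norm_num
  rw [h]; exact Matrix.diagonal_one

lemma sAspec : ∀ i, sA i = 1 ∨ sA i = -1 := by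
  intro i; unfold sA; split_ifs <;> simp
lemma sBspec : ∀ i, sB i = 1 ∨ sB i = -1 := by
  intro i; unfold sB; split_ifs <;> simp
lemma sCspec : ∀ i, sC i = 1 ∨ sC i = -1 := by
  intro i; unfold sC; split_ifs <;> simp

lemma detA : (Matrix.diagonal sA).det = 1 := by
  norm_num [Matrix.det_diagonal, sA, Fin.prod_univ_three, Fin.ext_iff, -Fin.val_eq_zero_iff]
lemma detB : (Matrix.diagonal sB).det = 1 := by
  norm_num [Matrix.det_diagonal, sB, Fin.prod_univ_three, Fin.ext_iff]
lemma detC : (Matrix.diagonal sC).det = 1 := by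
  norm_num [Matrix.det_diagonal, sC, Fin.prod_univ_three, Fin.ext_iff]

end Stmt4Aux

open Stmt4Aux in
theorem stmt_4
    (B : Matrix (Fin 3) (Fin 3) ℝ →ₗ[ℝ] Matrix (Fin 3) (Fin 3) ℝ →ₗ[ℝ] ℝ)
    (hBsym : ∀ X Y : Matrix (Fin 3) (Fin 3) ℝ, B X Y = B Y X)
    (W : Matrix (Fin 3) (Fin 3) ℝ → ℝ)
    (hW : ∀ X, W X = B X X)
    (hiso : ∀ Q X : Matrix (Fin 3) (Fin 3) ℝ,
      Qᵀ * Q = 1 → Q.det = 1 → W (Qᵀ * X * Q) = W X) :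
    ∃ b₁ b₂ b₃ : ℝ, ∀ X : Matrix (Fin 3) (Fin 3) ℝ,
      W X = b₁ * mnormSq (msym X) + b₂ * mnormSq (mskew X)
        + b₃ * (Matrix.trace X) ^ 2 := by
  -- polarization: B itself is invariant
  have Binv : ∀ Q X Y : Matrix (Fin 3) (Fin 3) ℝ, Qᵀ * Q = 1 → Q.det = 1 →
      B (Qᵀ * X * Q) (Qᵀ * Y * Q) = B X Y := by
    intro Q X Y h1 h2
    have e1 := hiso Q (X + Y) h1 h2
    have e2 := hiso Q X h1 h2
    have e3 := hiso Q Y h1 h2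
    simp only [hW, mul_add, add_mul, map_add, LinearMap.add_apply] at e1 e2 e3
    have hs := hBsym (Qᵀ * X * Q) (Qᵀ * Y * Q)
    have hs2 := hBsym X Y
    linarith
  -- sign relations
  have hsgn : ∀ (s : Fin 3 → ℝ), (∀ i, s i = 1 ∨ s i = -1) →
      (Matrix.diagonal s).det = 1 → ∀ i j k l : Fin 3,
      B (E i j) (E k l) = (s i * s j * s k * s l) * B (E i j) (E k l) := by
    intro s hs hdet i j k l
    have h := Binv (Matrix.diagonal s) (E i j) (E k l) (diagOrth s hs) hdet
    rw [conjDiag, conjDiag] at h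
    simp only [_root_.map_smul, LinearMap.smul_apply, smul_eq_mul] at h
    rcases hs i with hi|hi <;> rcases hs j with hj|hj <;> rcases hs k with hk|hk <;>
      rcases hs l with hl|hl <;> rw [hi, hj, hk, hl] at h ⊢ <;> linarith
  have hsgnA := hsgn sA sAspec detA
  have hsgnB := hsgn sB sBspec detB
  have hsgnC := hsgn sC sCspec detC
  -- cyclic relation
  have cyc : ∀ i j k l : Fin 3,
      B (E i j) (E k l) = B (E (nx i) (nx j)) (E (nx k) (nx l)) := by
    intro i j k l
    have h := Binv MC (E i j) (E k l) hMC1 hMC2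
    rw [conjC, conjC] at h
    exact h.symm
  -- swap relation
  have swp : ∀ i j k l : Fin 3,
      B (E i j) (E k l) = (sp i * sp j * sp k * sp l) *
        B (E (tw i) (tw j)) (E (tw k) (tw l)) := by
    intro i j k l
    have h := Binv MP (E i j) (E k l) hMP1 hMP2
    rw [conjP, conjP] at h
    simp only [_root_.map_smul, LinearMap.smul_apply, smul_eq_mul] at h
    rw [← h]; ring
  -- concrete zero facts (entries of the R-relation)
  have hz1 : B (E 0 0) (E 0 1) = 0 := by
    have h := hsgnA 0 0 0 1; norm_num [sA, Fin.ext_iff] at h; linarith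
  have hz2 : B (E 0 0) (E 1 0) = 0 := by
    have h := hsgnA 0 0 1 0; norm_num [sA, Fin.ext_iff] at h; linarith
  have hz3 : B (E 0 1) (E 0 0) = 0 := by
    have h := hsgnA 0 1 0 0; norm_num [sA, Fin.ext_iff] at h; linarith
  have hz4 : B (E 1 0) (E 0 0) = 0 := by
    have h := hsgnA 1 0 0 0; norm_num [sA, Fin.ext_iff] at h; linarith
  have hz5 : B (E 0 1) (E 1 1) = 0 := by
    have h := hsgnA 0 1 1 1; norm_num [sA, Fin.ext_iff] at h; linarith
  have hz6 : B (E 1 0) (E 1 1) = 0 := by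
    have h := hsgnA 1 0 1 1; norm_num [sA, Fin.ext_iff] at h; linarith
  have hz7 : B (E 1 1) (E 0 1) = 0 := by
    have h := hsgnA 1 1 0 1; norm_num [sA, Fin.ext_iff] at h; linarith
  have hz8 : B (E 1 1) (E 1 0) = 0 := by
    have h := hsgnA 1 1 1 0; norm_num [sA, Fin.ext_iff] at h; linarith
  -- concrete class facts
  have hc0 : B (E 0 0) (E 0 0) = B (E 1 1) (E 1 1) := by
    have h := cyc 0 0 0 0; norm_num [nx, Fin.ext_iff] at h; linarith
  have hs0 : B (E 0 0) (E 1 1) = B (E 1 1) (E 0 0) := hBsym _ _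
  have hs1 : B (E 0 1) (E 0 1) = B (E 1 0) (E 1 0) := by
    have h := swp 0 1 0 1; norm_num [sp, tw, Fin.ext_iff] at h; linarith
  have hs2 : B (E 0 1) (E 1 0) = B (E 1 0) (E 0 1) := hBsym _ _
  -- the R-rotation relation
  have hR0 := Binv MR (E 0 0) (E 0 0) hMR1 hMR2
  rw [conjR] at hR0
  simp only [map_add, _root_.map_smul, LinearMap.add_apply, LinearMap.smul_apply, smul_eq_mul] at hR0
  -- master formula
  have hm : ∀ i j k l : Fin 3, B (E i j) (E k l) =
      (if i = k ∧ j = l then B (E 0 1) (E 0 1) else 0) +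
      (if i = l ∧ j = k then B (E 0 1) (E 1 0) else 0) +
      (if i = j ∧ k = l then B (E 0 0) (E 1 1) else 0) := by
    intro i j k l
    have hi : i = 0 ∨ i = 1 ∨ i = 2 := by fin_cases i <;> simp
    have hj : j = 0 ∨ j = 1 ∨ j = 2 := by fin_cases j <;> simp
    have hk : k = 0 ∨ k = 1 ∨ k = 2 := by fin_cases k <;> simp
    have hl : l = 0 ∨ l = 1 ∨ l = 2 := by fin_cases l <;> simp
    have h1 := hsgnA i j k l
    have h2 := hsgnB i j k l
    have h3 := hsgnC i j k l
    have c1 := cyc i j k l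
    have c2 := cyc (nx i) (nx j) (nx k) (nx l)
    have c3 := cyc (nx (nx i)) (nx (nx j)) (nx (nx k)) (nx (nx l))
    have t1 := swp i j k l
    have t2 := swp (nx i) (nx j) (nx k) (nx l)
    have t3 := swp (nx (nx i)) (nx (nx j)) (nx (nx k)) (nx (nx l))
    rcases hi with rfl|rfl|rfl <;> rcases hj with rfl|rfl|rfl <;>
      rcases hk with rfl|rfl|rfl <;> rcases hl with rfl|rfl|rfl <;>
      norm_num [sA, sB, sC, nx, tw, sp, Fin.ext_iff] at h1 h2 h3 c1 c2 c3 t1 t2 t3 ⊢ <;>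
      linarith
  -- abstract the three constants to avoid simp loops
  have hm2 : ∃ ga de be : ℝ, ∀ i j k l : Fin 3, B (E i j) (E k l) =
      (if i = k ∧ j = l then ga else 0) +
      (if i = l ∧ j = k then de else 0) +
      (if i = j ∧ k = l then be else 0) := ⟨_, _, _, hm⟩
  obtain ⟨ga, de, be, hm2⟩ := hm2
  -- conclusion
  refine ⟨ga + de, ga - de, be, fun X => ?_⟩
  have hsb : ∀ (i j : Fin 3), single i j (X i j) = X i j • E i j := by
    intro i j; rw [smul_single, smul_eq_mul, mul_one]
  rw [hW]
  conv_lhs => rw [Matrix.matrix_eq_sum_single X]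
  simp only [hsb, map_sum, LinearMap.sum_apply, _root_.map_smul, LinearMap.smul_apply, smul_eq_mul]
  simp only [hm2]
  simp only [Fin.sum_univ_three, mnormSq, msym, mskew, Matrix.trace, Matrix.diag,
    Matrix.mul_apply, Matrix.transpose_apply, Matrix.add_apply, Matrix.sub_apply,
    Matrix.smul_apply, smul_eq_mul]
  norm_num [Fin.ext_iff]
  ring
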